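/- Let G be a connected finite simple graph with B(G) ≠ ∅ and Ω(G) ≠ ∅, and let p > 1. Let v_0 be a pendant vertex of G whose unique neighbor v_j has deg_G(v_j) ≥ 3, and let G' = G − v_0 be the graph obtained from G by deleting v_0 and its incident edge (so that B(G') = B(G) \ {v_0} and Ω(G') = Ω(G)). Then λ_{1,p}(G') ≤ λ_{1,p}(G). -/

import Mathlib

attribute [local instance] Classical.propDecidable

open Finset

/-- The degree of a vertex `x` in a finite simple graph `G`. -/
noncomputable def deg {V : Type*} [Fintype V] (G : SimpleGraph V) (x : V) : ℕ :=
  (Finset.univ.filter (fun y => G.Adj x y)).card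

/-- The `p`-energy `‖df‖_{p,G}^p = Σ_{{x,y} ∈ E(G)} |f x - f y|^p`
(each unordered edge counted once, i.e. half the double sum). -/
noncomputable def energy {V : Type*} [Fintype V] (G : SimpleGraph V) (p : ℝ) (f : V → ℝ) : ℝ :=
  (∑ x : V, ∑ y : V, if G.Adj x y then |f x - f y| ^ p else 0) / 2

/-- The weighted `p`-norm `‖f‖_{p,G}^p = Σ_x |f x|^p · deg x`. -/
noncomputable def pnorm {V : Type*} [Fintype V] (G : SimpleGraph V) (p : ℝ) (f : V → ℝ) : ℝ :=
  ∑ x : V, |f x| ^ p * (deg G x : ℝ)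

/-- The `p`-Rayleigh quotient `R_{p,G}[f]`. -/
noncomputable def rayleigh {V : Type*} [Fintype V] (G : SimpleGraph V) (p : ℝ) (f : V → ℝ) : ℝ :=
  energy G p f / pnorm G p f

/-- The first `p`-Dirichlet eigenvalue `λ_{1,p}(G)`: the infimum of Rayleigh quotients of
nonzero functions vanishing on the boundary `B(G)` (the set of pendant vertices). -/
noncomputable def lambda1 {V : Type*} [Fintype V] (G : SimpleGraph V) (p : ℝ) : ℝ :=
  sInf { r : ℝ | ∃ f : V → ℝ, (∀ x : V, deg G x = 1 → f x = 0) ∧ f ≠ 0 ∧ r = rayleigh G p f }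

/-- The number of edges with exactly one endpoint in `U`. -/
noncomputable def cutCard {V : Type*} [Fintype V] (G : SimpleGraph V) (U : Finset V) : ℕ :=
  ∑ x ∈ U, (Finset.univ.filter (fun y => G.Adj x y ∧ y ∉ U)).card

/-- The Dirichlet Cheeger constant `h_D(G)`. -/
noncomputable def cheeger {V : Type*} [Fintype V] (G : SimpleGraph V) : ℝ :=
  sInf { r : ℝ | ∃ U : Finset V, U.Nonempty ∧ (∀ x ∈ U, deg G x ≠ 1) ∧
    r = (cutCard G U : ℝ) / ∑ x ∈ U, (deg G x : ℝ) }

/-- The tadpole graph `T_{n,i}` on vertices `0, …, n-1` (vertex `k-1` representing `t_k`):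
edges between consecutive vertices together with the edge `t_1 ∼ t_i`. -/
def tadpole (n i : ℕ) : SimpleGraph (Fin n) :=
  SimpleGraph.fromRel (fun a b => b.val = a.val + 1 ∨ (a.val = 0 ∧ b.val = i - 1))

/-- The path graph on `n` vertices. -/
def pathG (n : ℕ) : SimpleGraph (Fin n) :=
  SimpleGraph.fromRel (fun a b => b.val = a.val + 1)

section Helpers
variable {V : Type*} [Fintype V]

lemma energy_nonneg (G : SimpleGraph V) (p : ℝ) (f : V → ℝ) : 0 ≤ energy G p f := by
  unfold energy
  apply div_nonneg _ (by norm_num)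
  refine Finset.sum_nonneg fun x _ => Finset.sum_nonneg fun y _ => ?_
  split
  · exact Real.rpow_nonneg (abs_nonneg _) p
  · exact le_refl 0

lemma pnorm_nonneg (G : SimpleGraph V) (p : ℝ) (f : V → ℝ) : 0 ≤ pnorm G p f := by
  refine Finset.sum_nonneg fun x _ => ?_
  exact mul_nonneg (Real.rpow_nonneg (abs_nonneg _) p) (Nat.cast_nonneg _)

lemma rayleigh_nonneg (G : SimpleGraph V) (p : ℝ) (f : V → ℝ) : 0 ≤ rayleigh G p f :=
  div_nonneg (energy_nonneg G p f) (pnorm_nonneg G p f)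

lemma deg_eq_sum (G : SimpleGraph V) (x : V) :
    deg G x = ∑ y : V, if G.Adj x y then 1 else 0 := by
  rw [deg, Finset.card_filter]

lemma rayleigh_indicator (G : SimpleGraph V) {p : ℝ} (hp : p ≠ 0) (w : V) (hw : 0 < deg G w)
    {g : V → ℝ} (hg : ∀ x, g x = if x = w then 1 else 0) :
    rayleigh G p g = 1 := by
  have hgf : g = fun x => if x = w then 1 else 0 := funext hg
  subst hgf
  have he : energy G p (fun x => if x = w then (1:ℝ) else 0) = deg G w := by
    unfold energy
    rw [div_eq_iff (by norm_num : (2:ℝ) ≠ 0)]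
    have key : ∀ x y : V, (if G.Adj x y then
        |(if x = w then (1:ℝ) else 0) - (if y = w then 1 else 0)| ^ p else 0)
        = (if G.Adj x y ∧ x = w then (1:ℝ) else 0) + (if G.Adj x y ∧ y = w then 1 else 0) := by
      intro x y
      by_cases hxy : G.Adj x y
      · have hne : x ≠ y := hxy.ne
        by_cases hx : x = w <;> by_cases hy : y = w
        · exact absurd (hx.trans hy.symm) hne
        · simp [hxy, hx, hy, Real.one_rpow]
        · simp [hxy, hx, hy, Real.one_rpow]
        · simp [hxy, hx, hy, Real.zero_rpow hp]
      · simp [hxy]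
    simp_rw [key, Finset.sum_add_distrib]
    have h1 : (∑ x : V, ∑ y : V, if G.Adj x y ∧ x = w then (1:ℝ) else 0) = deg G w := by
      have h : ∀ x : V, (∑ y : V, if G.Adj x y ∧ x = w then (1:ℝ) else 0)
          = if x = w then (deg G x : ℝ) else 0 := by
        intro x
        by_cases hx : x = w
        · simp only [hx, if_true, and_true, deg_eq_sum, Nat.cast_sum]
          simp
        · simp [hx]
      simp_rw [h]
      simp
    have h2 : (∑ x : V, ∑ y : V, if G.Adj x y ∧ y = w then (1:ℝ) else 0) = deg G w := by
      rw [Finset.sum_comm]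
      have h : ∀ y : V, (∑ x : V, if G.Adj x y ∧ y = w then (1:ℝ) else 0)
          = if y = w then (deg G y : ℝ) else 0 := by
        intro y
        by_cases hy : y = w
        · simp only [hy, if_true, and_true, deg_eq_sum, Nat.cast_sum]
          congr 1
          ext x
          rw [G.adj_comm]
          simp
        · simp [hy]
      simp_rw [h]
      simp
    rw [h1, h2]; ring
  have hn : pnorm G p (fun x => if x = w then (1:ℝ) else 0) = deg G w := by
    unfold pnorm
    rw [Finset.sum_eq_single w]
    · simp [Real.one_rpow]
    · intro b _ hb
      simp [hb, Real.zero_rpow hp]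
    · simp
  rw [rayleigh, he, hn, div_self]
  exact_mod_cast hw.ne'

end Helpers

set_option maxHeartbeats 1000000 in
/-- Deleting a pendant vertex `v₀` whose unique neighbor `v_j` has degree at least `3`
does not increase the first `p`-Dirichlet eigenvalue. -/
theorem lambda1_delete_pendant {V : Type*} [Fintype V] (G : SimpleGraph V)
    (hconn : G.Connected) (hB : ∃ x : V, deg G x = 1) (hΩ : ∃ x : V, deg G x ≠ 1)
    (p : ℝ) (hp : 1 < p)
    (v₀ vj : V) (h₀ : deg G v₀ = 1) (hadj : G.Adj v₀ vj) (hj : 3 ≤ deg G vj) :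
    lambda1 (G.induce {x : V | x ≠ v₀}) p ≤ lambda1 G p := by
  have hp0 : p ≠ 0 := by positivity
  set S : Set V := {x : V | x ≠ v₀} with hS
  set G' := G.induce S with hG'
  have hv₀j : v₀ ≠ vj := hadj.ne
  have hvjS : vj ∈ S := hv₀j.symm
  -- unique neighbor of v₀
  have hnb : ∀ y : V, G.Adj v₀ y → y = vj := by
    intro y hy
    obtain ⟨b, hb⟩ := Finset.card_eq_one.mp (h₀ : (univ.filter (fun z => G.Adj v₀ z)).card = 1)
    have h1 : y ∈ univ.filter (fun z => G.Adj v₀ z) := by simp [hy]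
    have h2 : vj ∈ univ.filter (fun z => G.Adj v₀ z) := by simp [hadj]
    rw [hb, Finset.mem_singleton] at h1 h2
    rw [h1, ← h2]
  -- membership in erase v₀ ↔ membership in S
  have hiff : ∀ z : V, z ∈ univ.erase v₀ ↔ z ∈ S := by
    intro z; simp [hS]
  -- degree in G'
  have hdeg' : ∀ x : ↥S, deg G' x = if (x : V) = vj then deg G vj - 1 else deg G (x : V) := by
    intro x
    have hstep : deg G' x = ∑ y ∈ univ.erase v₀, (if G.Adj (x : V) y then 1 else 0) := by
      rw [deg, Finset.card_filter]
      rw [Finset.sum_subtype (univ.erase v₀) hiff (fun z => if G.Adj (x : V) z then 1 else 0)]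
      apply Finset.sum_congr rfl
      intro y _
      rfl
    have h3 : ((if G.Adj (x : V) v₀ then 1 else 0) +
        ∑ y ∈ univ.erase v₀, (if G.Adj (x : V) y then 1 else 0))
        = ∑ y : V, (if G.Adj (x : V) y then 1 else 0) :=
      Finset.add_sum_erase univ (fun y => if G.Adj (x : V) y then 1 else 0) (Finset.mem_univ v₀)
    have h4 : (∑ y : V, if G.Adj (x : V) y then 1 else 0) = deg G (x : V) :=
      (deg_eq_sum G _).symm
    rcases eq_or_ne (x : V) vj with hx | hx
    · rw [hstep, if_pos hx]
      have hxv : G.Adj (x : V) v₀ := hx ▸ hadj.symm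
      rw [if_pos hxv] at h3
      have h5 : deg G (x : V) = deg G vj := by rw [hx]
      omega
    · rw [hstep, if_neg hx]
      have hz : ¬ G.Adj (x : V) v₀ := by
        intro hc
        exact hx (hnb _ hc.symm)
      rw [if_neg hz] at h3
      omega
  -- sums over subtype
  have hsum : ∀ g : V → ℝ, (∑ x : ↥S, g ↑x) = ∑ x ∈ univ.erase v₀, g x := by
    intro g
    exact (Finset.sum_subtype (univ.erase v₀) hiff g).symm
  -- all degrees positive
  have hdegpos : ∀ x : V, 0 < deg G x := by
    intro x
    rcases eq_or_ne x v₀ with h | h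
    · rw [h, h₀]; norm_num
    · obtain ⟨w⟩ := hconn.preconnected x v₀
      cases w with
      | nil => exact absurd rfl h
      | cons hadj' _ =>
        rw [deg]
        apply Finset.card_pos.mpr
        exact ⟨_, Finset.mem_filter.mpr ⟨Finset.mem_univ _, hadj'⟩⟩
  unfold lambda1
  have hbdd : BddBelow { r : ℝ | ∃ g : ↥S → ℝ,
      (∀ x, deg G' x = 1 → g x = 0) ∧ g ≠ 0 ∧ r = rayleigh G' p g } := by
    refine ⟨0, ?_⟩
    rintro r ⟨g, -, -, rfl⟩
    exact rayleigh_nonneg _ _ _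
  apply le_csInf
  · refine ⟨rayleigh G p (fun x => if x = vj then 1 else 0),
      (fun x => if x = vj then 1 else 0), ?_, ?_, rfl⟩
    · intro x hx
      have hxj : x ≠ vj := by intro h; rw [h] at hx; omega
      simp [hxj]
    · intro h
      have := congrFun h vj
      simp at this
  · rintro r ⟨f, hfB, hf0, rfl⟩
    have hfv₀ : f v₀ = 0 := hfB v₀ h₀
    have hNpos : 0 < pnorm G p f := by
      obtain ⟨x, hx⟩ := Function.ne_iff.mp hf0
      refine Finset.sum_pos'
        (fun y _ => mul_nonneg (Real.rpow_nonneg (abs_nonneg _) _) (Nat.cast_nonneg _))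
        ⟨x, Finset.mem_univ x, mul_pos (Real.rpow_pos_of_pos (abs_pos.mpr hx) p) ?_⟩
      exact_mod_cast hdegpos x
    rcases le_or_gt (pnorm G p f) (energy G p f) with hEN | hEN
    · -- rayleigh ≥ 1; use indicator of vj in G'
      have hvjdeg : deg G' (⟨vj, hvjS⟩ : ↥S) = deg G vj - 1 := by
        rw [hdeg']; simp
      have h1mem : (1:ℝ) ∈ { r : ℝ | ∃ g : ↥S → ℝ,
          (∀ x, deg G' x = 1 → g x = 0) ∧ g ≠ 0 ∧ r = rayleigh G' p g } := by
        refine ⟨(fun x : ↥S => if x = ⟨vj, hvjS⟩ then 1 else 0), ?_, ?_, ?_⟩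
        · intro x hx
          have hxj : x ≠ ⟨vj, hvjS⟩ := by
            intro h; rw [h, hvjdeg] at hx; omega
          simp [hxj]
        · intro h
          have := congrFun h ⟨vj, hvjS⟩
          simp at this
        · exact (rayleigh_indicator G' hp0 (⟨vj, hvjS⟩ : ↥S) (by rw [hvjdeg]; omega)
            (fun x => by by_cases h : x = ⟨vj, hvjS⟩ <;> simp [h])).symm
      refine le_trans (csInf_le hbdd h1mem) ?_
      rw [rayleigh, le_div_iff₀ hNpos]
      linarith
    · -- restriction of f
      set f' : ↥S → ℝ := fun x => f ↑x with hf'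
      set a : ℝ := |f vj| ^ p with haa
      have ha : 0 ≤ a := Real.rpow_nonneg (abs_nonneg _) p
      -- pnorm identity
      have hN' : pnorm G' p f' = pnorm G p f - a := by
        unfold pnorm
        have hcong : ∀ x : ↥S, |f' x| ^ p * (deg G' x : ℝ)
            = |f ↑x| ^ p * (deg G (x : V) : ℝ) - (if (x : V) = vj then a else 0) := by
          intro x
          rw [hdeg' x]
          rcases eq_or_ne (x : V) vj with hx | hx
          · rw [if_pos hx, if_pos hx, hf']
            simp only [hx]
            rw [Nat.cast_sub (by omega : 1 ≤ deg G vj)]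
            push_cast
            ring
          · rw [if_neg hx, if_neg hx, hf']
            ring
        rw [Finset.sum_congr rfl (fun x _ => hcong x), Finset.sum_sub_distrib]
        rw [hsum (fun z => |f z| ^ p * (deg G z : ℝ)), hsum (fun z => if z = vj then a else 0)]
        have e1 : (∑ x ∈ univ.erase v₀, |f x| ^ p * (deg G x : ℝ))
            = ∑ x : V, |f x| ^ p * (deg G x : ℝ) := by
          apply Finset.sum_erase
          simp [hfv₀, Real.zero_rpow hp0]
        have e2 : (∑ x ∈ univ.erase v₀, if x = vj then a else 0) = a := by
          rw [Finset.sum_ite_eq']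
          rw [if_pos (by simp [hv₀j.symm])]
        rw [e1, e2]
      -- energy identity
      have hE' : energy G' p f' = energy G p f - a := by
        set e : V → V → ℝ := fun x y => if G.Adj x y then |f x - f y| ^ p else 0 with he
        have hmain : (∑ x : ↥S, ∑ y : ↥S, if G'.Adj x y then |f' x - f' y| ^ p else 0)
            = ∑ x ∈ univ.erase v₀, ∑ y ∈ univ.erase v₀, e x y := by
          have t1 : ∀ x : ↥S, (∑ y : ↥S, if G'.Adj x y then |f' x - f' y| ^ p else 0)
              = ∑ y ∈ univ.erase v₀, e (↑x) y := fun x => hsum (fun z => e (↑x) z)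
          calc (∑ x : ↥S, ∑ y : ↥S, if G'.Adj x y then |f' x - f' y| ^ p else 0)
              = ∑ x : ↥S, ∑ y ∈ univ.erase v₀, e (↑x) y :=
                Finset.sum_congr rfl (fun x _ => t1 x)
            _ = ∑ x ∈ univ.erase v₀, ∑ y ∈ univ.erase v₀, e x y :=
                hsum (fun z => ∑ y ∈ univ.erase v₀, e z y)
        have hrow : ∀ x : V, (∑ y : V, e x y) = e x v₀ + ∑ y ∈ univ.erase v₀, e x y := by
          intro x
          exact (Finset.add_sum_erase univ (e x) (Finset.mem_univ v₀)).symm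
        have hcol : (∑ x : V, e x v₀) = a := by
          rw [Finset.sum_eq_single vj]
          · rw [he]
            simp only
            rw [if_pos hadj.symm, hfv₀, sub_zero]
          · intro b _ hb
            rw [he]
            simp only
            rw [if_neg]
            intro hc
            exact hb (hnb b hc.symm)
          · simp
        have hrow0 : (∑ y ∈ univ.erase v₀, e v₀ y) = a := by
          rw [Finset.sum_eq_single_of_mem vj (by simp [hv₀j.symm])]
          · rw [he]
            simp only
            rw [if_pos hadj, hfv₀, zero_sub, abs_neg]
          · intro b _ hb
            rw [he]
            simp only
            rw [if_neg]
            intro hc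
            exact hb (hnb b hc)
        have hsplit : (∑ x : V, ∑ y : V, e x y)
            = (∑ x : V, e x v₀) + ∑ x : V, ∑ y ∈ univ.erase v₀, e x y := by
          rw [← Finset.sum_add_distrib]
          exact Finset.sum_congr rfl (fun x _ => hrow x)
        have hsplit2 : (∑ x : V, ∑ y ∈ univ.erase v₀, e x y)
            = a + ∑ x ∈ univ.erase v₀, ∑ y ∈ univ.erase v₀, e x y := by
          rw [← hrow0]
          exact (Finset.add_sum_erase univ (fun x => ∑ y ∈ univ.erase v₀, e x y)
            (Finset.mem_univ v₀)).symm
        have : energy G' p f' = (∑ x ∈ univ.erase v₀, ∑ y ∈ univ.erase v₀, e x y) / 2 := by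
          rw [energy]
          congr 1
        rw [this, energy]
        rw [hsplit, hcol, hsplit2]
        ring
      -- the restricted function is admissible
      have hmemf' : rayleigh G' p f' ∈ { r : ℝ | ∃ g : ↥S → ℝ,
          (∀ x, deg G' x = 1 → g x = 0) ∧ g ≠ 0 ∧ r = rayleigh G' p g } := by
        refine ⟨f', ?_, ?_, rfl⟩
        · intro x hx
          rcases eq_or_ne (x : V) vj with h | h
          · rw [hdeg' x, if_pos h] at hx
            omega
          · rw [hdeg' x, if_neg h] at hx
            exact hfB _ hx
        · intro h
          obtain ⟨x, hx⟩ := Function.ne_iff.mp hf0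
          have hxS : x ∈ S := by
            intro hc
            exact hx (hc ▸ hfv₀)
          exact hx (congrFun h ⟨x, hxS⟩)
      have hE'nn : 0 ≤ energy G p f - a := hE' ▸ energy_nonneg G' p f'
      have hfin : rayleigh G' p f' ≤ rayleigh G p f := by
        rw [rayleigh, rayleigh, hE', hN', div_le_div_iff₀ (by linarith) hNpos]
        nlinarith [mul_le_mul_of_nonneg_left hEN.le ha]
      exact le_trans (csInf_le hbdd hmemf') hfin
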